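/- Let n ≥ 3 and let X be a C³ conformal Killing field on EuclideanSpace ℝ n. Then the function V = δ^e X = −div X lies in the kernel of the adjoint of the linearized scalar curvature operator at the Euclidean metric, i.e. for every x, v, w one has Hess V x (v, w) + (ΔV x)·⟪v, w⟫ = 0, where ΔV x = −(trace of Hess V x). (This is the key fact, combining Lemma 2.2 at λ = 0 with the description of (DScal)_e*, that allows Michel's approach to be applied with V = δ^e X in the proof that the classical mass m(g) equals the Ricci version m_R(g) and that the classical center of mass equals its Ricci version.) -/

import Mathlib

open scoped RealInnerProductSpace

/-- The `i`-th standard basis vector of `EuclideanSpace ℝ (Fin n)`. -/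
noncomputable def stdBasis (n : ℕ) (i : Fin n) : EuclideanSpace ℝ (Fin n) :=
  EuclideanSpace.single i (1 : ℝ)

/-- The Euclidean divergence of a vector field: the trace of its derivative. -/
noncomputable def divE (n : ℕ) (X : EuclideanSpace ℝ (Fin n) → EuclideanSpace ℝ (Fin n))
    (x : EuclideanSpace ℝ (Fin n)) : ℝ :=
  ∑ i : Fin n, ⟪fderiv ℝ X x (stdBasis n i), stdBasis n i⟫

/-- The Euclidean Hessian of a function, `Hess V x (v, w) = fderiv (fderiv V) x v w`. -/
noncomputable def hessE (n : ℕ) (V : EuclideanSpace ℝ (Fin n) → ℝ)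
    (x v w : EuclideanSpace ℝ (Fin n)) : ℝ :=
  fderiv ℝ (fderiv ℝ V) x v w

/-- The geometer's Laplacian, `ΔV = −(trace of Hess V)`. -/
noncomputable def laplE (n : ℕ) (V : EuclideanSpace ℝ (Fin n) → ℝ)
    (x : EuclideanSpace ℝ (Fin n)) : ℝ :=
  -∑ i : Fin n, hessE n V x (stdBasis n i) (stdBasis n i)


open ContinuousLinearMap
set_option synthInstance.maxHeartbeats 1000000
set_option maxHeartbeats 1000000

noncomputable section CKAux

variable {n : ℕ}

abbrev Eu (n : ℕ) := EuclideanSpace ℝ (Fin n)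

/-- `psiCK v w T = ⟪T v, w⟫` as a continuous linear map in `T`. -/
def psiCK (v w : Eu n) : (Eu n →L[ℝ] Eu n) →L[ℝ] ℝ :=
  (innerSL ℝ w).comp ((ContinuousLinearMap.apply ℝ (Eu n)) v)

lemma psiCK_apply (v w : Eu n) (T : Eu n →L[ℝ] Eu n) : psiCK v w T = ⟪T v, w⟫ := by
  show ⟪w, T v⟫ = ⟪T v, w⟫
  exact real_inner_comm _ _

/-- trace functional -/
def phiCK (n : ℕ) : (Eu n →L[ℝ] Eu n) →L[ℝ] ℝ :=
  ∑ i : Fin n, psiCK (stdBasis n i) (stdBasis n i)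

lemma phiCK_apply (T : Eu n →L[ℝ] Eu n) :
    phiCK n T = ∑ i : Fin n, ⟪T (stdBasis n i), stdBasis n i⟫ := by
  simp [phiCK, ContinuousLinearMap.sum_apply, psiCK_apply]

lemma stdBasis_decomp (u : Eu n) :
    ∑ i : Fin n, (⟪u, stdBasis n i⟫ : ℝ) • stdBasis n i = u := by
  have h := (EuclideanSpace.basisFun (Fin n) ℝ).sum_repr' u
  simpa [stdBasis, EuclideanSpace.basisFun_apply, real_inner_comm] using h

lemma stdBasis_inner_self (i : Fin n) : (⟪stdBasis n i, stdBasis n i⟫ : ℝ) = 1 := by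
  simp [stdBasis]

variable
  {D1 : Eu n → Eu n →L[ℝ] Eu n}
  {D2 : Eu n → Eu n →L[ℝ] Eu n →L[ℝ] Eu n}
  {D3 : Eu n → Eu n →L[ℝ] Eu n →L[ℝ] Eu n →L[ℝ] Eu n}
  {f : Eu n → ℝ}

/-- differentiated conformal Killing equation -/
lemma dCK (hD1 : ∀ x, HasFDerivAt D1 (D2 x) x)
    (hf : ∀ x, f x = phiCK n (D1 x))
    (hCK : ∀ x v w, psiCK v w (D1 x) + psiCK w v (D1 x) = (2 / (n:ℝ)) * f x * ⟪v, w⟫) :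
    ∀ x u v w, psiCK v w (D2 x u) + psiCK w v (D2 x u)
      = (2 / (n:ℝ)) * phiCK n (D2 x u) * ⟪v, w⟫ := by
  intro x u v w
  have hfd : HasFDerivAt f ((phiCK n).comp (D2 x)) x := by
    have h := (phiCK n).hasFDerivAt.comp x (hD1 x)
    have h2 : f = (phiCK n) ∘ D1 := funext hf
    rw [h2]; exact h
  have hL : HasFDerivAt (fun y => psiCK v w (D1 y) + psiCK w v (D1 y))
      ((psiCK v w).comp (D2 x) + (psiCK w v).comp (D2 x)) x :=
    ((psiCK v w).hasFDerivAt.comp x (hD1 x)).add ((psiCK w v).hasFDerivAt.comp x (hD1 x))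
  have heq : (fun y => psiCK v w (D1 y) + psiCK w v (D1 y))
      = fun y => (2 / (n:ℝ)) * f y * ⟪v, w⟫ := funext fun y => hCK y v w
  rw [heq] at hL
  have hR : HasFDerivAt (fun y => (2 / (n:ℝ)) * f y * ⟪v, w⟫)
      ((⟪v, w⟫ : ℝ) • ((2 / (n:ℝ)) • ((phiCK n).comp (D2 x)))) x :=
    (hfd.const_mul _).mul_const _
  have := hL.unique hR
  have happ := congrArg (fun L => L u) this
  simp only [ContinuousLinearMap.add_apply, ContinuousLinearMap.coe_comp', Function.comp_apply,
    ContinuousLinearMap.coe_smul', Pi.smul_apply, smul_eq_mul] at happ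
  rw [happ]; ring

/-- formula for the second derivative of a conformal Killing field -/
lemma Bform (hD1 : ∀ x, HasFDerivAt D1 (D2 x) x)
    (hsym2 : ∀ x u v, D2 x u v = D2 x v u)
    (hf : ∀ x, f x = phiCK n (D1 x))
    (hCK : ∀ x v w, psiCK v w (D1 x) + psiCK w v (D1 x) = (2 / (n:ℝ)) * f x * ⟪v, w⟫) :
    ∀ x u v w, psiCK v w (D2 x u)
      = (1 / (n:ℝ)) * (phiCK n (D2 x u) * ⟪v, w⟫ + phiCK n (D2 x v) * ⟪u, w⟫
          - phiCK n (D2 x w) * ⟪u, v⟫) := by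
  intro x u v w
  have hswap : ∀ a b c : Eu n, psiCK b c (D2 x a) = psiCK a c (D2 x b) := by
    intro a b c
    rw [psiCK_apply, psiCK_apply, hsym2 x a b]
  have h1 := dCK hD1 hf hCK x u v w
  have h2 := dCK hD1 hf hCK x v w u
  have h3 := dCK hD1 hf hCK x w u v
  have sA : psiCK w v (D2 x u) = psiCK u v (D2 x w) := hswap u w v
  have sB : psiCK w u (D2 x v) = psiCK v u (D2 x w) := hswap v w u
  have sC : psiCK u w (D2 x v) = psiCK v w (D2 x u) := hswap v u w
  have c1 : (⟪w, u⟫ : ℝ) = ⟪u, w⟫ := real_inner_comm _ _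
  linear_combination (1/2 : ℝ) * h1 + (1/2 : ℝ) * h2 - (1/2 : ℝ) * h3
    - (1/2 : ℝ) * sA - (1/2 : ℝ) * sB - (1/2 : ℝ) * sC
    + (phiCK n (D2 x v) / (n:ℝ)) * c1
/-- apply at a vector, as a CLM on second-derivative type -/
noncomputable def appCK (u : Eu n) : (Eu n →L[ℝ] Eu n →L[ℝ] Eu n) →L[ℝ] Eu n →L[ℝ] Eu n :=
  (ContinuousLinearMap.apply ℝ (Eu n →L[ℝ] Eu n)) u

/-- differentiated Bform -/
lemma dB (hD1 : ∀ x, HasFDerivAt D1 (D2 x) x) (hD2 : ∀ x, HasFDerivAt D2 (D3 x) x)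
    (hsym2 : ∀ x u v, D2 x u v = D2 x v u)
    (hf : ∀ x, f x = phiCK n (D1 x))
    (hCK : ∀ x v w, psiCK v w (D1 x) + psiCK w v (D1 x) = (2 / (n:ℝ)) * f x * ⟪v, w⟫) :
    ∀ x t u v w, psiCK v w (D3 x t u)
      = (1 / (n:ℝ)) * (phiCK n (D3 x t u) * ⟪v, w⟫ + phiCK n (D3 x t v) * ⟪u, w⟫
          - phiCK n (D3 x t w) * ⟪u, v⟫) := by
  intro x t u v w
  have hL : HasFDerivAt (fun y => psiCK v w (D2 y u))
      (((psiCK v w).comp (appCK u)).comp (D3 x)) x := by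
    have h := (psiCK v w).hasFDerivAt.comp x ((hD2 x).clm_apply (hasFDerivAt_const u x))
    exact h.congr_fderiv (by ext y; simp [appCK])
  have hphi : ∀ a : Eu n, HasFDerivAt (fun y => phiCK n (D2 y a))
      (((phiCK n).comp (appCK a)).comp (D3 x)) x := by
    intro a
    have h := (phiCK n).hasFDerivAt.comp x ((hD2 x).clm_apply (hasFDerivAt_const a x))
    exact h.congr_fderiv (by ext y; simp [appCK])
  have hR : HasFDerivAt
      (fun y => (1 / (n:ℝ)) * (phiCK n (D2 y u) * ⟪v, w⟫ + phiCK n (D2 y v) * ⟪u, w⟫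
          - phiCK n (D2 y w) * ⟪u, v⟫))
      ((1 / (n:ℝ)) • (((⟪v, w⟫ : ℝ) • (((phiCK n).comp (appCK u)).comp (D3 x))
        + (⟪u, w⟫ : ℝ) • (((phiCK n).comp (appCK v)).comp (D3 x)))
        - (⟪u, v⟫ : ℝ) • (((phiCK n).comp (appCK w)).comp (D3 x)))) x :=
    ((((hphi u).mul_const _).add ((hphi v).mul_const _)).sub
      ((hphi w).mul_const _)).const_mul _
  have heq : (fun y => psiCK v w (D2 y u))
      = fun y => (1 / (n:ℝ)) * (phiCK n (D2 y u) * ⟪v, w⟫ + phiCK n (D2 y v) * ⟪u, w⟫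
          - phiCK n (D2 y w) * ⟪u, v⟫) :=
    funext fun y => Bform hD1 hsym2 hf hCK y u v w
  rw [heq] at hL
  have := hL.unique hR
  have happ := congrArg (fun L => L t) this
  simp only [ContinuousLinearMap.coe_comp', Function.comp_apply, ContinuousLinearMap.coe_smul',
    Pi.smul_apply, ContinuousLinearMap.add_apply, ContinuousLinearMap.coe_sub', Pi.sub_apply,
    smul_eq_mul, appCK, ContinuousLinearMap.apply_apply] at happ
  rw [happ]; ring

lemma clm_sum (L : Eu n →L[ℝ] ℝ) (u : Eu n) :
    ∑ i : Fin n, (⟪u, stdBasis n i⟫ : ℝ) * L (stdBasis n i) = L u := by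
  have h := congrArg L (stdBasis_decomp u)
  simpa [map_sum, map_smul, smul_eq_mul] using h

/-- the Hessian of the divergence vanishes -/
lemma Gzero (hn : 3 ≤ n)
    (hD1 : ∀ x, HasFDerivAt D1 (D2 x) x) (hD2 : ∀ x, HasFDerivAt D2 (D3 x) x)
    (hsym2 : ∀ x u v, D2 x u v = D2 x v u)
    (hsym3 : ∀ x t u, D3 x t u = D3 x u t)
    (hf : ∀ x, f x = phiCK n (D1 x))
    (hCK : ∀ x v w, psiCK v w (D1 x) + psiCK w v (D1 x) = (2 / (n:ℝ)) * f x * ⟪v, w⟫) :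
    ∀ x t u, phiCK n (D3 x t u) = 0 := by
  intro x t u
  have hn0 : (n:ℝ) ≠ 0 := Nat.cast_ne_zero.mpr (by omega)
  have hn1 : (1 / (n:ℝ)) ≠ 0 := one_div_ne_zero hn0
  have star : ∀ t u v w : Eu n,
      phiCK n (D3 x t v) * ⟪u, w⟫ - phiCK n (D3 x t w) * ⟪u, v⟫
        = phiCK n (D3 x u v) * ⟪t, w⟫ - phiCK n (D3 x u w) * ⟪t, v⟫ := by
    intro t u v w
    have h1 := dB hD1 hD2 hsym2 hf hCK x t u v w
    have h2 := dB hD1 hD2 hsym2 hf hCK x u t v w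
    have e1 : psiCK v w (D3 x t u) = psiCK v w (D3 x u t) := by rw [hsym3]
    have e2 : phiCK n (D3 x t u) = phiCK n (D3 x u t) := by rw [hsym3]
    have hs : (1 / (n:ℝ)) * (phiCK n (D3 x t v) * ⟪u, w⟫ - phiCK n (D3 x t w) * ⟪u, v⟫)
        = (1 / (n:ℝ)) * (phiCK n (D3 x u v) * ⟪t, w⟫ - phiCK n (D3 x u w) * ⟪t, v⟫) := by
      linear_combination h2 - h1 + e1 - ((⟪v, w⟫ : ℝ) / (n:ℝ)) * e2
    exact mul_left_cancel₀ hn1 hs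
  -- summations
  set e : Fin n → Eu n := stdBasis n with he
  have sum3 : ∑ i : Fin n, (⟪e i, e i⟫ : ℝ) = (n:ℝ) := by
    calc ∑ i : Fin n, (⟪e i, e i⟫ : ℝ) = ∑ _i : Fin n, (1:ℝ) :=
          Finset.sum_congr rfl fun i _ => stdBasis_inner_self i
      _ = (n:ℝ) := by simp
  have sum1 : ∀ u v : Eu n,
      ∑ i : Fin n, phiCK n (D3 x (e i) v) * ⟪u, e i⟫ = phiCK n (D3 x u v) := by
    intro u v
    have h := clm_sum (((phiCK n).comp (appCK v)).comp (D3 x)) u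
    simp only [ContinuousLinearMap.coe_comp', Function.comp_apply, appCK,
      ContinuousLinearMap.apply_apply] at h
    rw [← h]
    exact Finset.sum_congr rfl fun i _ => mul_comm _ _
  have sum2 : ∀ u v : Eu n,
      ∑ i : Fin n, phiCK n (D3 x u (e i)) * ⟪e i, v⟫ = phiCK n (D3 x u v) := by
    intro u v
    have h := clm_sum ((phiCK n).comp (D3 x u)) v
    simp only [ContinuousLinearMap.coe_comp', Function.comp_apply] at h
    rw [← h]
    exact Finset.sum_congr rfl fun i _ => by rw [real_inner_comm, mul_comm]
  have master : ∀ u v : Eu n,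
      phiCK n (D3 x u v) - (∑ i : Fin n, phiCK n (D3 x (e i) (e i))) * ⟪u, v⟫
        = (n:ℝ) * phiCK n (D3 x u v) - phiCK n (D3 x u v) := by
    intro u v
    have hsum : ∑ i : Fin n,
        (phiCK n (D3 x (e i) v) * ⟪u, e i⟫ - phiCK n (D3 x (e i) (e i)) * ⟪u, v⟫)
        = ∑ i : Fin n,
        (phiCK n (D3 x u v) * ⟪e i, e i⟫ - phiCK n (D3 x u (e i)) * ⟪e i, v⟫) :=
      Finset.sum_congr rfl fun i _ => star (e i) u v (e i)
    rw [Finset.sum_sub_distrib, Finset.sum_sub_distrib, ← Finset.sum_mul, ← Finset.mul_sum,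
      sum1, sum2, sum3] at hsum
    linarith [hsum]
  have Tzero : (∑ i : Fin n, phiCK n (D3 x (e i) (e i))) = 0 := by
    have h := Finset.sum_congr rfl fun (j : Fin n) (_ : j ∈ Finset.univ) => master (e j) (e j)
    rw [Finset.sum_sub_distrib, Finset.sum_sub_distrib, ← Finset.mul_sum, ← Finset.mul_sum] at h
    rw [sum3] at h
    have h4 : ((n:ℝ) - 1) * (∑ i : Fin n, phiCK n (D3 x (e i) (e i))) = 0 := by
      linear_combination (-(1/2 : ℝ)) * h
    have hn3 : (n:ℝ) - 1 ≠ 0 := by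
      have : (3:ℝ) ≤ (n:ℝ) := by exact_mod_cast hn
      intro hc; linarith
    exact (mul_eq_zero.mp h4).resolve_left hn3
  have h := master t u
  rw [Tzero] at h
  have hn2 : (n:ℝ) - 2 ≠ 0 := by
    have : (3:ℝ) ≤ (n:ℝ) := by exact_mod_cast hn
    intro hc; linarith
  have : ((n:ℝ) - 2) * phiCK n (D3 x t u) = 0 := by linarith
  exact (mul_eq_zero.mp this).resolve_left hn2

end CKAux

lemma hess_div_eq_zero
    (n : ℕ) (hn : 3 ≤ n)
    (X : EuclideanSpace ℝ (Fin n) → EuclideanSpace ℝ (Fin n))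
    (hX : ContDiff ℝ 3 X)
    (hCK : ∀ (x v w : EuclideanSpace ℝ (Fin n)),
      ⟪fderiv ℝ X x v, w⟫ + ⟪fderiv ℝ X x w, v⟫ = (2 / (n : ℝ)) * divE n X x * ⟪v, w⟫) :
    ∀ x v w : EuclideanSpace ℝ (Fin n),
      fderiv ℝ (fderiv ℝ (divE n X)) x v w = 0 := by
  intro x v w
  have hD1c : ContDiff ℝ 2 (fderiv ℝ X) := hX.fderiv_right (by norm_num)
  have hD2c : ContDiff ℝ 1 (fderiv ℝ (fderiv ℝ X)) := hD1c.fderiv_right (by norm_num)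
  have hD1 : ∀ y : Eu n, HasFDerivAt (fderiv ℝ X) (fderiv ℝ (fderiv ℝ X) y) y := fun y =>
    ((hD1c.differentiable (by norm_num)) y).hasFDerivAt
  have hD2 : ∀ y : Eu n, HasFDerivAt (fderiv ℝ (fderiv ℝ X))
      (fderiv ℝ (fderiv ℝ (fderiv ℝ X)) y) y := fun y =>
    ((hD2c.differentiable (by norm_num)) y).hasFDerivAt
  have hsym2 : ∀ (y u v : Eu n), fderiv ℝ (fderiv ℝ X) y u v = fderiv ℝ (fderiv ℝ X) y v u :=
    fun y => hX.contDiffAt.isSymmSndFDerivAt (by norm_num)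
  have hsym3 : ∀ (y t u : Eu n), fderiv ℝ (fderiv ℝ (fderiv ℝ X)) y t u
      = fderiv ℝ (fderiv ℝ (fderiv ℝ X)) y u t :=
    fun y => hD1c.contDiffAt.isSymmSndFDerivAt (by norm_num)
  have hf : ∀ y : Eu n, divE n X y = phiCK n (fderiv ℝ X y) := fun y => (phiCK_apply _).symm
  have hCK' : ∀ (y v w : Eu n), psiCK v w (fderiv ℝ X y) + psiCK w v (fderiv ℝ X y)
      = (2 / (n:ℝ)) * divE n X y * ⟪v, w⟫ := by
    intro y v w; rw [psiCK_apply, psiCK_apply]; exact hCK y v w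
  have hzero := Gzero hn hD1 hD2 hsym2 hsym3 hf hCK' x v w
  -- now identify the Hessian of divE with phiCK ∘ D3
  have hfd : ∀ y : Eu n, HasFDerivAt (divE n X) ((phiCK n).comp (fderiv ℝ (fderiv ℝ X) y)) y := by
    intro y
    have h := (phiCK n).hasFDerivAt.comp y (hD1 y)
    have h2 : divE n X = (phiCK n) ∘ (fderiv ℝ X) := funext hf
    rw [h2]; exact h
  have h1 : fderiv ℝ (divE n X) = fun y => (phiCK n).comp (fderiv ℝ (fderiv ℝ X) y) :=
    funext fun y => (hfd y).fderiv
  have hfd2 : HasFDerivAt (fun y => (phiCK n).comp (fderiv ℝ (fderiv ℝ X) y))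
      (((ContinuousLinearMap.compL ℝ (Eu n) (Eu n →L[ℝ] Eu n) ℝ) (phiCK n)).comp
        (fderiv ℝ (fderiv ℝ (fderiv ℝ X)) x)) x := by
    have h := (hasFDerivAt_const (phiCK n) x).clm_comp (hD2 x)
    exact h.congr_fderiv (by simp)
  have h2 : fderiv ℝ (fderiv ℝ (divE n X)) x
      = ((ContinuousLinearMap.compL ℝ (Eu n) (Eu n →L[ℝ] Eu n) ℝ) (phiCK n)).comp
        (fderiv ℝ (fderiv ℝ (fderiv ℝ X)) x) := by
    rw [h1]; exact hfd2.fderiv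
  rw [h2]
  simpa using hzero

/-- **`δ^e X` lies in the kernel of `(DScal)_e*`.** If `n ≥ 3` and `X` is a `C³` conformal
Killing field of the Euclidean metric, then `V = δ^e X = −div X` satisfies
`Hess V + (ΔV)·e = 0`, the kernel equation of the adjoint of the linearized scalar
curvature operator at the Euclidean metric. -/
theorem div_conformal_killing_mem_kernel_adjoint
    (n : ℕ) (hn : 3 ≤ n)
    (X : EuclideanSpace ℝ (Fin n) → EuclideanSpace ℝ (Fin n))
    (hX : ContDiff ℝ 3 X)
    (hCK : ∀ (x v w : EuclideanSpace ℝ (Fin n)),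
      ⟪fderiv ℝ X x v, w⟫ + ⟪fderiv ℝ X x w, v⟫ = (2 / (n : ℝ)) * divE n X x * ⟪v, w⟫) :
    ∀ (x v w : EuclideanSpace ℝ (Fin n)),
      hessE n (fun y => -divE n X y) x v w +
        laplE n (fun y => -divE n X y) x * ⟪v, w⟫ = 0 := by
  have key := hess_div_eq_zero n hn X hX hCK
  have hneg : ∀ x v w : EuclideanSpace ℝ (Fin n),
      hessE n (fun y => -divE n X y) x v w = 0 := by
    intro x v w
    unfold hessE
    have h1 : (fderiv ℝ fun y => -divE n X y) = fun z => -fderiv ℝ (divE n X) z :=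
      funext fun z => fderiv_neg
    rw [h1, fderiv_fun_neg]
    simp [key x v w]
  intro x v w
  rw [hneg x v w]
  unfold laplE
  have : ∀ i : Fin n, hessE n (fun y => -divE n X y) x (stdBasis n i) (stdBasis n i) = 0 :=
    fun i => hneg x _ _
  rw [Finset.sum_congr rfl fun i _ => this i]
  simp
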